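/- Let z₀ ∈ ℂ, r > 0, and let h be holomorphic on the open disk D(z₀, r) with h'(ζ) ≠ 0 for all ζ ∈ D(z₀, r). If |h''(ζ)/h'(ζ)| < 1/r for all ζ ∈ D(z₀, r), then h is injective on D(z₀, r). -/

import Mathlib

open Set Metric intervalIntegral

/-- Injectivity criterion: if h is holomorphic on D(z₀,r) with non-vanishing
derivative and |h''/h'| < 1/r there, then h is injective on D(z₀,r). -/
theorem stmt_2 (z₀ : ℂ) (r : ℝ) (hr : 0 < r) (h h' h'' : ℂ → ℂ)
    (hd1 : ∀ ζ ∈ Metric.ball z₀ r, HasDerivAt h (h' ζ) ζ)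
    (hd2 : ∀ ζ ∈ Metric.ball z₀ r, HasDerivAt h' (h'' ζ) ζ)
    (hne : ∀ ζ ∈ Metric.ball z₀ r, h' ζ ≠ 0)
    (hbound : ∀ ζ ∈ Metric.ball z₀ r, ‖h'' ζ / h' ζ‖ < 1 / r) :
    Set.InjOn h (Metric.ball z₀ r) := by
  intro a ha b hb hab
  by_contra hab'
  set γ : ℝ → ℂ := fun t => a + (t : ℂ) * (b - a) with hγdef
  have hγd : ∀ t : ℝ, HasDerivAt γ (b - a) t := by
    intro t
    have h1 : HasDerivAt (fun t : ℝ => (t : ℂ)) 1 t := by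
      simpa using (hasDerivAt_id t).ofReal_comp
    simpa [hγdef] using (h1.mul_const (b - a)).const_add a
  have hγc : Continuous γ := by
    exact continuous_const.add (Complex.continuous_ofReal.mul continuous_const)
  have hmem : ∀ t ∈ Icc (0 : ℝ) 1, γ t ∈ Metric.ball z₀ r := by
    intro t ht
    have := (convex_ball z₀ r).add_smul_sub_mem ha hb ht
    simpa [hγdef, Complex.real_smul] using this
  -- open preimage set
  set T : Set ℝ := γ ⁻¹' (Metric.ball z₀ r) with hTdef
  have hTopen : IsOpen T := Metric.isOpen_ball.preimage hγc
  have hTsub : Icc (0 : ℝ) 1 ⊆ T := fun t ht => hmem t ht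
  -- continuity of h' and h'' on the ball
  have hBd : DifferentiableOn ℂ h' (Metric.ball z₀ r) :=
    fun ζ hζ => ((hd2 ζ hζ).differentiableAt).differentiableWithinAt
  have hh'c : ContinuousOn h' (Metric.ball z₀ r) :=
    fun ζ hζ => ((hd2 ζ hζ).differentiableAt).continuousAt.continuousWithinAt
  have hh''c : ContinuousOn h'' (Metric.ball z₀ r) := by
    have hA : AnalyticOnNhd ℂ h' (Metric.ball z₀ r) :=
      hBd.analyticOnNhd Metric.isOpen_ball
    have : ContinuousOn (deriv h') (Metric.ball z₀ r) := by
      exact fun ζ hζ => ((hA.deriv ζ hζ).differentiableAt).continuousAt.continuousWithinAt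
    exact this.congr fun ζ hζ => ((hd2 ζ hζ).deriv).symm
  -- the function P
  set P : ℝ → ℂ := fun s => (b - a) * (h'' (γ s) / h' (γ s)) with hPdef
  have hPc : ContinuousOn P T := by
    have h1 : ContinuousOn (fun s => h'' (γ s)) T :=
      hh''c.comp hγc.continuousOn (fun s hs => hs)
    have h2 : ContinuousOn (fun s => h' (γ s)) T :=
      hh'c.comp hγc.continuousOn (fun s hs => hs)
    exact continuousOn_const.mul (h1.div h2 (fun s hs => hne _ hs))
  set Q : ℝ → ℂ := fun t => ∫ s in (1/2 : ℝ)..t, P s with hQdef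
  have huIcc : ∀ t ∈ Icc (0:ℝ) 1, uIcc (1/2 : ℝ) t ⊆ Icc (0:ℝ) 1 := by
    intro t ht
    apply uIcc_subset_Icc (by norm_num) ht
  have hQd : ∀ t ∈ Icc (0:ℝ) 1, HasDerivAt Q (P t) t := by
    intro t ht
    refine intervalIntegral.integral_hasDerivAt_right ?_ ?_ ?_
    · exact (hPc.mono ((huIcc t ht).trans hTsub)).intervalIntegrable
    · exact ContinuousOn.stronglyMeasurableAtFilter hTopen hPc t (hTsub ht)
    · exact hPc.continuousAt (hTopen.mem_nhds (hTsub ht))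
  -- K is constant
  have hKd : ∀ t ∈ Icc (0:ℝ) 1,
      HasDerivAt (fun t => h' (γ t) * Complex.exp (-Q t)) 0 t := by
    intro t ht
    have d1 : HasDerivAt (fun t => h' (γ t)) ((b - a) * h'' (γ t)) t := by
      have := HasDerivAt.scomp (h := γ) (x := t) (hd2 _ (hmem t ht)) (hγd t)
      simpa [Function.comp_def, smul_eq_mul, mul_comm] using this
    have d2 : HasDerivAt (fun t => Complex.exp (-Q t)) (-(P t) * Complex.exp (-Q t)) t := by
      have := HasDerivAt.scomp (h := fun t => -Q t) (x := t)
        (Complex.hasDerivAt_exp (-Q t)) ((hQd t ht).neg)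
      simpa [Function.comp_def, smul_eq_mul] using this
    have := d1.mul d2
    convert this using 1
    case e'_4 => rfl
    case e'_8 => rfl
    have hne' := hne _ (hmem t ht)
    rw [hPdef]
    field_simp
    ring
  have hKconst : ∀ t ∈ Icc (0:ℝ) 1,
      h' (γ t) * Complex.exp (-Q t) = h' (γ (1/2 : ℝ)) * Complex.exp (-Q (1/2 : ℝ)) := by
    intro t ht
    have hint : ∫ s in (1/2 : ℝ)..t, (0 : ℂ) =
        h' (γ t) * Complex.exp (-Q t) - h' (γ (1/2 : ℝ)) * Complex.exp (-Q (1/2 : ℝ)) := by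
      refine intervalIntegral.integral_eq_sub_of_hasDerivAt
        (f := fun t => h' (γ t) * Complex.exp (-Q t)) (f' := fun _ => (0:ℂ)) ?_
        (intervalIntegrable_const (c := (0:ℂ)))
      intro s hs
      exact hKd s ((huIcc t ht) hs)
    rw [intervalIntegral.integral_zero] at hint
    exact (sub_eq_zero.mp hint.symm)
  have hQhalf : Q (1/2 : ℝ) = 0 := by simp [hQdef]
  have hexp : ∀ t ∈ Icc (0:ℝ) 1, h' (γ t) = h' (γ (1/2 : ℝ)) * Complex.exp (Q t) := by
    intro t ht
    have e := hKconst t ht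
    rw [hQhalf, neg_zero, Complex.exp_zero, mul_one] at e
    calc h' (γ t) = h' (γ t) * Complex.exp (-Q t) * Complex.exp (Q t) := by
          rw [mul_assoc, ← Complex.exp_add]; simp
      _ = h' (γ (1/2 : ℝ)) * Complex.exp (Q t) := by rw [e]
  -- bound on Q
  have hdist : ‖b - a‖ < 2 * r := by
    have h1 : dist a z₀ < r := mem_ball.mp ha
    have h2 : dist b z₀ < r := mem_ball.mp hb
    have : dist b a ≤ dist b z₀ + dist z₀ a := dist_triangle _ _ _
    rw [Complex.dist_eq] at this
    rw [dist_comm] at h1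
    linarith [this, h2, h1]
  have hQb : ∀ t ∈ Icc (0:ℝ) 1, ‖Q t‖ < 1 := by
    intro t ht
    have hC : ∀ s ∈ uIoc (1/2 : ℝ) t, ‖P s‖ ≤ ‖b - a‖ * (1 / r) := by
      intro s hs
      have hs' : s ∈ Icc (0:ℝ) 1 := (huIcc t ht) (uIoc_subset_uIcc hs)
      have := (hbound _ (hmem s hs')).le
      calc ‖P s‖ = ‖b - a‖ * ‖h'' (γ s) / h' (γ s)‖ := by
            simp [hPdef]
        _ ≤ ‖b - a‖ * (1 / r) := by
            exact mul_le_mul_of_nonneg_left this (norm_nonneg _)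
    have hb1 : ‖Q t‖ ≤ ‖b - a‖ * (1 / r) * |t - 1/2| :=
      intervalIntegral.norm_integral_le_of_norm_le_const hC
    have ht2 : |t - 1/2| ≤ 1/2 := by
      rw [abs_le]; constructor <;> [linarith [ht.1]; linarith [ht.2]]
    have hnn : (0:ℝ) ≤ ‖b - a‖ * (1 / r) := by positivity
    have : ‖Q t‖ ≤ ‖b - a‖ * (1 / r) * (1/2) :=
      hb1.trans (mul_le_mul_of_nonneg_left ht2 hnn)
    have hlt : ‖b - a‖ * (1 / r) * (1/2) < 1 := by
      have heq : ‖b - a‖ * (1 / r) * (1/2) = ‖b - a‖ / (2 * r) := by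
        rw [mul_one_div, mul_one_div, div_div, mul_comm r 2]
      rw [heq, div_lt_one (by positivity)]
      exact hdist
    calc ‖Q t‖ = ‖Q t‖ := rfl
      _ < 1 := lt_of_le_of_lt this hlt
  -- positivity of real part
  have hm : γ (1/2 : ℝ) ∈ Metric.ball z₀ r := hmem _ (by norm_num)
  have hmne : h' (γ (1/2 : ℝ)) ≠ 0 := hne _ hm
  have hpos : ∀ t ∈ Icc (0:ℝ) 1, 0 < (h' (γ t) / h' (γ (1/2 : ℝ))).re := by
    intro t ht
    rw [hexp t ht]
    rw [mul_comm, mul_div_assoc, div_self hmne, mul_one]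
    rw [Complex.exp_re]
    apply mul_pos (Real.exp_pos _)
    apply Real.cos_pos_of_mem_Ioo
    have him : |(Q t).im| ≤ ‖Q t‖ := Complex.abs_im_le_norm _
    have hq1 := hQb t ht
    have hpi : (1:ℝ) < Real.pi / 2 := by linarith [Real.pi_gt_three]
    constructor
    · rw [abs_le] at him; linarith [him.1]
    · rw [abs_le] at him; linarith [him.2]
  -- FTC for h
  have hcont1 : ContinuousOn (fun t => (b - a) * h' (γ t)) (Icc (0:ℝ) 1) := by
    exact continuousOn_const.mul ((hh'c.comp hγc.continuousOn (fun s hs => hmem s hs)))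
  have hFTC : ∫ t in (0:ℝ)..1, (b - a) * h' (γ t) = h (γ 1) - h (γ 0) := by
    have key := intervalIntegral.integral_eq_sub_of_hasDerivAt (a := (0:ℝ)) (b := 1)
      (f := fun t => h (γ t)) (f' := fun t => (b - a) * h' (γ t)) ?_ ?_
    · exact key
    · intro t ht
      rw [uIcc_of_le (by norm_num : (0:ℝ) ≤ 1)] at ht
      have := HasDerivAt.scomp (h := γ) (x := t) (hd1 _ (hmem t ht)) (hγd t)
      simpa [Function.comp_def, smul_eq_mul, mul_comm] using this
    · exact (hcont1.mono (uIcc_of_le (by norm_num : (0:ℝ) ≤ 1)).subset).intervalIntegrable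
  have hγ0 : γ 0 = a := by simp [hγdef]
  have hγ1 : γ 1 = b := by simp [hγdef]
  have hzero : ∫ t in (0:ℝ)..1, (b - a) * h' (γ t) = 0 := by
    rw [hFTC, hγ0, hγ1, hab]
    ring
  have hba : b - a ≠ 0 := sub_ne_zero.mpr (Ne.symm hab')
  have hIzero : ∫ t in (0:ℝ)..1, h' (γ t) / h' (γ (1/2 : ℝ)) = 0 := by
    have : ∀ t : ℝ, h' (γ t) / h' (γ (1/2 : ℝ)) =
        (1 / ((b - a) * h' (γ (1/2 : ℝ)))) * ((b - a) * h' (γ t)) := by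
      intro t; field_simp
    simp_rw [this]
    rw [intervalIntegral.integral_const_mul, hzero, mul_zero]
  -- re of integral
  have hcont2 : ContinuousOn (fun t => h' (γ t) / h' (γ (1/2 : ℝ))) (Icc (0:ℝ) 1) := by
    exact ((hh'c.comp hγc.continuousOn (fun s hs => hmem s hs))).div_const _
  have hint2 : IntervalIntegrable (fun t => h' (γ t) / h' (γ (1/2 : ℝ))) MeasureTheory.volume 0 1 := by
    rw [← uIcc_of_le (by norm_num : (0:ℝ) ≤ 1)] at hcont2
    exact hcont2.intervalIntegrable
  have hre : ∫ t in (0:ℝ)..1, (h' (γ t) / h' (γ (1/2 : ℝ))).re = 0 := by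
    have hcc := Complex.reCLM.intervalIntegral_comp_comm hint2
    simp only [Complex.reCLM_apply] at hcc
    rw [hcc, hIzero]
    simp
  have hposint : 0 < ∫ t in (0:ℝ)..1, (h' (γ t) / h' (γ (1/2 : ℝ))).re := by
    apply intervalIntegral.intervalIntegral_pos_of_pos_on
    · have : ContinuousOn (fun t => (h' (γ t) / h' (γ (1/2 : ℝ))).re) (Icc (0:ℝ) 1) :=
        Complex.continuous_re.comp_continuousOn hcont2
      rw [← uIcc_of_le (by norm_num : (0:ℝ) ≤ 1)] at this
      exact this.intervalIntegrable
    · intro t ht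
      exact hpos t (Ioo_subset_Icc_self ht)
    · norm_num
  rw [hre] at hposint
  exact lt_irrefl 0 hposint
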